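/- Let k be an algebraically closed field, G a finite group of order n coprime to the characteristic of k, and φ : G → Aut_k(k⟦z⟧) an injective group homomorphism into the group of k-algebra automorphisms of k⟦z⟧. Then there exist a power series w ∈ k⟦z⟧ whose constant coefficient is 0 and whose coefficient of z is nonzero, and an injective group homomorphism χ : G → kˣ, such that φ_g(w) = χ(g)·w for every g ∈ G; moreover χ(g)ⁿ = 1 for every g ∈ G. -/

import Mathlib

open PowerSeries

namespace SkewAux
variable {k : Type*} [Field k]

lemma coeff_one_mul (a b : PowerSeries k) :
    (coeff 1) (a * b) = coeff 0 a * coeff 1 b + coeff 1 a * coeff 0 b := by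
  rw [coeff_mul, Finset.Nat.antidiagonal_succ]
  simp [Finset.sum_insert, Prod.map]

lemma const_sigma_X (σ : PowerSeries k ≃ₐ[k] PowerSeries k) :
    constantCoeff (σ X) = 0 := by
  by_contra h
  have hu : IsUnit (σ X) := by
    rw [isUnit_iff_constantCoeff]; exact isUnit_iff_ne_zero.mpr h
  have : IsUnit (X : PowerSeries k) := by
    have := hu.map (σ.symm : PowerSeries k →+* PowerSeries k)
    simpa using this
  rw [isUnit_iff_constantCoeff] at this
  simp at this

lemma X_dvd_sigma_X (σ : PowerSeries k ≃ₐ[k] PowerSeries k) : (X : PowerSeries k) ∣ σ X :=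
  X_dvd_iff.mpr (const_sigma_X σ)

lemma const_sigma (σ : PowerSeries k ≃ₐ[k] PowerSeries k) (f : PowerSeries k) :
    constantCoeff (σ f) = constantCoeff f := by
  obtain ⟨g, hg⟩ : (X : PowerSeries k) ∣ (f - C (constantCoeff f)) := by
    rw [X_dvd_iff]; simp
  have hf : f = C (constantCoeff f) + X * g := by rw [← hg]; ring
  have hC : σ (C (constantCoeff f)) = C (constantCoeff f) := by
    rw [C_eq_algebraMap]; exact σ.commutes _
  rw [hf, map_add, map_mul, hC, map_add, map_mul]
  simp [const_sigma_X σ]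

lemma coeff1_sigma_X_ne (σ : PowerSeries k ≃ₐ[k] PowerSeries k) :
    coeff 1 (σ X) ≠ 0 := by
  obtain ⟨f, hf⟩ : ∃ f, σ f = X := ⟨σ.symm X, σ.apply_symm_apply X⟩
  have hcf : constantCoeff f = 0 := by
    rw [← const_sigma σ f, hf]; simp
  obtain ⟨g, hg⟩ := X_dvd_iff.mpr hcf
  have : (1 : k) = coeff 1 (σ X * σ g) := by
    rw [← map_mul, ← hg, hf]; simp
  rw [coeff_one_mul] at this
  simp only [coeff_zero_eq_constantCoeff, const_sigma_X σ, zero_mul, zero_add] at this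
  intro h; rw [h, zero_mul] at this; exact one_ne_zero this

lemma coeff1_sigma_mul (σ τ : PowerSeries k ≃ₐ[k] PowerSeries k) :
    coeff 1 (σ (τ X)) = coeff 1 (σ X) * coeff 1 (τ X) := by
  obtain ⟨h, hh⟩ := X_dvd_sigma_X τ
  have hch : constantCoeff h = coeff 1 (τ X) := by
    rw [hh, ← coeff_zero_eq_constantCoeff_apply]
    have := coeff_succ_X_mul (R := k) 0 h
    rw [this]
  rw [hh, map_mul, coeff_one_mul]
  simp only [coeff_zero_eq_constantCoeff, const_sigma_X σ, zero_mul, zero_add,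
    const_sigma σ h, hch, ← hh]

lemma coeff_zero_of_X_pow_dvd {N i : ℕ} {h : PowerSeries k} (hd : (X : PowerSeries k) ^ N ∣ h)
    (hi : i < N) : coeff i h = 0 := X_pow_dvd_iff.mp hd i hi

lemma monomial_eq_C_mul_X_pow (i : ℕ) (a : k) :
    (monomial i) a = C a * X ^ i := by
  ext n
  rw [coeff_monomial, coeff_C_mul_X_pow]

lemma sigma_poly (σ : PowerSeries k ≃ₐ[k] PowerSeries k) (hX : σ X = X) (P : Polynomial k) :
    σ ↑P = (↑P : PowerSeries k) := by
  induction P using Polynomial.induction_on' with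
  | add p q hp hq => rw [Polynomial.coe_add, map_add, hp, hq]
  | monomial i a =>
      rw [Polynomial.coe_monomial, monomial_eq_C_mul_X_pow, map_mul, map_pow, hX,
        C_eq_algebraMap, σ.commutes]

lemma eq_one_of_fixes_X (σ : PowerSeries k ≃ₐ[k] PowerSeries k) (hX : σ X = X) : σ = 1 := by
  apply AlgEquiv.ext
  intro h
  apply PowerSeries.ext
  intro N
  set P := trunc (N + 1) h with hP
  have hdvd : (X : PowerSeries k) ^ (N + 1) ∣ (h - ↑P) := by
    rw [X_pow_dvd_iff]
    intro i hi
    simp [hP, Polynomial.coeff_coe, coeff_trunc, hi]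
  obtain ⟨r, hr⟩ := hdvd
  have hh : h = (↑P : PowerSeries k) + X ^ (N + 1) * r := by rw [← hr]; ring
  have hσ : σ h = (↑P : PowerSeries k) + X ^ (N + 1) * σ r := by
    rw [hh, map_add, map_mul, sigma_poly σ hX, map_pow, hX]
  have e1 : coeff N (X ^ (N + 1) * σ r) = 0 :=
    coeff_zero_of_X_pow_dvd (dvd_mul_right _ _) (Nat.lt_succ_self N)
  have e2 : coeff N (X ^ (N + 1) * r) = 0 :=
    coeff_zero_of_X_pow_dvd (dvd_mul_right _ _) (Nat.lt_succ_self N)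
  show coeff N (σ h) = coeff N h
  rw [hσ, hh, map_add, map_add, e1, e2]

/-- If `σ X ≡ X mod X^m` with `m ≥ 2`, then `(σ X)^m ≡ X^m mod X^(m+1)`. -/
lemma pow_m_congr {σ : PowerSeries k ≃ₐ[k] PowerSeries k} {m : ℕ} (hm : 2 ≤ m)
    (hf : (X : PowerSeries k) ^ m ∣ (σ X - X)) :
    (X : PowerSeries k) ^ (m + 1) ∣ ((σ X) ^ m - X ^ m) := by
  set f := σ X - X with hfdef
  have hσX : σ X = X + f := by rw [hfdef]; ring
  rw [hσX, add_pow]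
  rw [Finset.sum_range_succ]
  simp only [tsub_self, pow_zero, mul_one, Nat.choose_self, Nat.cast_one]
  rw [add_sub_cancel_right]
  apply Finset.dvd_sum
  intro i hi
  rw [Finset.mem_range] at hi
  obtain ⟨u, hu⟩ := hf
  have : (X : PowerSeries k) ^ (m + 1) ∣ X ^ i * f ^ (m - i) := by
    rw [hu, mul_pow, ← pow_mul, ← mul_assoc, ← pow_add]
    apply Dvd.dvd.mul_right
    apply pow_dvd_pow
    have h1 : 1 ≤ m - i := by omega
    calc m + 1 ≤ i + m * (m - i) := by nlinarith [Nat.sub_add_cancel (le_of_lt hi)]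
      _ = i + m * (m - i) := rfl
  exact this.mul_right _

/-- Stability under `σ` of congruence mod `X^m`. -/
lemma sigma_stable {σ : PowerSeries k ≃ₐ[k] PowerSeries k} {m : ℕ} (hm : 2 ≤ m)
    (hf : ∀ i < m, coeff i (σ X - X) = 0)
    {g : PowerSeries k} (hg : ∀ i < m, coeff i g = 0) :
    (∀ i < m, coeff i (σ g) = 0) ∧ coeff m (σ g) = coeff m g := by
  have hfdvd : (X : PowerSeries k) ^ m ∣ (σ X - X) := X_pow_dvd_iff.mpr hf
  have hXdvd : (X : PowerSeries k) ∣ σ X := X_dvd_sigma_X σ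
  set a := coeff m g with ha
  have hdvd : (X : PowerSeries k) ^ (m + 1) ∣ (g - C a * X ^ m) := by
    rw [X_pow_dvd_iff]
    intro i hi
    rw [map_sub, coeff_C_mul_X_pow]
    rcases Nat.lt_or_ge i m with h | h
    · rw [hg i h, if_neg (by omega)]; ring
    · have : i = m := by omega
      subst this
      rw [if_pos rfl, ha]; ring
  obtain ⟨r, hr⟩ := hdvd
  have hgeq : g = C a * X ^ m + X ^ (m + 1) * r := by rw [← hr]; ring
  have hσg : σ g = C a * (σ X) ^ m + (σ X) ^ (m + 1) * σ r := by
    rw [hgeq, map_add, map_mul, map_mul, map_pow, map_pow, C_eq_algebraMap, σ.commutes,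
      ← C_eq_algebraMap]
  have hd2 : (X : PowerSeries k) ^ (m + 1) ∣ (σ X) ^ (m + 1) * σ r :=
    ((pow_dvd_pow_of_dvd hXdvd (m + 1)).mul_right _)
  have key : ∀ i ≤ m, coeff i (σ g) = coeff i (C a * X ^ m) := by
    intro i hi
    rw [hσg, map_add, coeff_zero_of_X_pow_dvd hd2 (by omega), add_zero]
    have h3 : C a * (σ X) ^ m = C a * X ^ m + C a * ((σ X) ^ m - X ^ m) := by ring
    rw [h3, map_add]
    have h4 : coeff i (C a * ((σ X) ^ m - X ^ m)) = 0 :=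
      coeff_zero_of_X_pow_dvd ((pow_m_congr hm hfdvd).mul_left _) (by omega)
    rw [h4, add_zero]
  constructor
  · intro i hi
    rw [key i (le_of_lt hi), coeff_C_mul_X_pow, if_neg (by omega)]
  · rw [key m le_rfl, coeff_C_mul_X_pow, if_pos rfl]

lemma pow_diff_coeff {σ : PowerSeries k ≃ₐ[k] PowerSeries k} {m : ℕ} (hm : 2 ≤ m)
    (hf : ∀ i < m, coeff i (σ X - X) = 0) :
    ∀ j : ℕ, (∀ i < m, coeff i ((σ ^ j) X - X) = 0) ∧
      coeff m ((σ ^ j) X - X) = (j : k) * coeff m (σ X - X) := by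
  intro j
  induction j with
  | zero => simp
  | succ j ih =>
      have hstep : (σ ^ (j + 1)) X = σ ((σ ^ j) X) := by
        rw [pow_succ']; rfl
      set g := (σ ^ j) X - X with hg
      have hXg : (σ ^ j) X = X + g := by rw [hg]; ring
      have hkey : (σ ^ (j + 1)) X - X = (σ X - X) + σ g := by
        rw [hstep, hXg, map_add]; ring
      obtain ⟨ih1, ih2⟩ := ih
      obtain ⟨s1, s2⟩ := sigma_stable hm hf ih1
      constructor
      · intro i hi
        rw [hkey, map_add, hf i hi, s1 i hi, add_zero]
      · rw [hkey, map_add, s2, ih2]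
        push_cast
        ring

lemma fixes_X {σ : PowerSeries k ≃ₐ[k] PowerSeries k} {n : ℕ}
    (hσn : σ ^ n = 1) (hnk : IsUnit (n : k)) (h1 : coeff 1 (σ X) = 1) :
    σ X = X := by
  by_contra hne
  have hfne : σ X - X ≠ 0 := sub_ne_zero.mpr hne
  have hex : ∃ i, coeff i (σ X - X) ≠ 0 := by
    by_contra hc
    push_neg at hc
    exact hfne (PowerSeries.ext fun i => by rw [hc i, map_zero])
  classical
  set m := Nat.find hex with hm
  have hspec : coeff m (σ X - X) ≠ 0 := Nat.find_spec hex
  have hmin : ∀ i < m, coeff i (σ X - X) = 0 := by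
    intro i hi
    by_contra hc
    exact Nat.find_min hex hi hc
  have hc0 : coeff 0 (σ X - X) = 0 := by
    rw [map_sub, coeff_zero_eq_constantCoeff_apply, coeff_zero_eq_constantCoeff_apply,
      const_sigma_X σ]
    simp
  have hc1 : coeff 1 (σ X - X) = 0 := by
    rw [map_sub, h1]
    simp
  have hm2 : 2 ≤ m := by
    rcases Nat.lt_or_ge m 2 with h | h
    · interval_cases m
      · exact absurd hc0 hspec
      · exact absurd hc1 hspec
    · exact h
  have hkey := (pow_diff_coeff hm2 hmin n).2
  rw [hσn] at hkey
  have hz : coeff m ((1 : PowerSeries k ≃ₐ[k] PowerSeries k) X - X) = 0 := by simp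
  rw [hz] at hkey
  have h5 : (n : k) * coeff m (σ X - X) = 0 := hkey.symm
  have : coeff m (σ X - X) = 0 := (mul_eq_zero.mp h5).resolve_left hnk.ne_zero
  exact hspec this

end SkewAux

theorem skew_action_on_power_series_diagonalizable
    {k : Type*} [Field k] [IsAlgClosed k]
    (G : Type*) [Group G] [Fintype G]
    (n : ℕ) (hn : n = Fintype.card G)
    (hcop : IsUnit ((n : k)))
    (φ : G →* (PowerSeries k ≃ₐ[k] PowerSeries k))
    (hφ : Function.Injective φ) :
    ∃ (w : PowerSeries k) (χ : G →* kˣ),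
      PowerSeries.constantCoeff w = 0 ∧
      PowerSeries.coeff 1 w ≠ 0 ∧
      Function.Injective χ ∧
      (∀ g : G, φ g w = PowerSeries.C (χ g : k) * w) ∧
      (∀ g : G, (χ g : k) ^ n = 1) := by
  classical
  set c : G → k := fun g => PowerSeries.coeff 1 (φ g PowerSeries.X) with hc
  have hcne : ∀ g, c g ≠ 0 := fun g => SkewAux.coeff1_sigma_X_ne (φ g)
  have hcmul : ∀ g h : G, c (g * h) = c g * c h := by
    intro g h
    have : φ (g * h) PowerSeries.X = φ g (φ h PowerSeries.X) := by
      rw [map_mul]; rfl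
    rw [hc]
    simp only
    rw [this, SkewAux.coeff1_sigma_mul]
  set χ : G →* kˣ := MonoidHom.mk' (fun g => Units.mk0 (c g) (hcne g))
    (fun g h => Units.ext (by simp [hcmul])) with hχ
  have hχval : ∀ g, (χ g : k) = c g := fun g => rfl
  -- the eigenvector
  set w : PowerSeries k := ∑ g : G, PowerSeries.C (c g)⁻¹ * φ g PowerSeries.X with hw
  have hconst : PowerSeries.constantCoeff w = 0 := by
    rw [hw, map_sum]
    apply Finset.sum_eq_zero
    intro g _
    rw [map_mul, SkewAux.const_sigma_X (φ g), mul_zero]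
  have hcoeff1 : PowerSeries.coeff 1 w = (n : k) := by
    rw [hw, map_sum]
    have : ∀ g ∈ Finset.univ (α := G),
        PowerSeries.coeff 1 (PowerSeries.C (c g)⁻¹ * φ g PowerSeries.X) = 1 := by
      intro g _
      rw [PowerSeries.coeff_C_mul]
      exact inv_mul_cancel₀ (hcne g)
    rw [Finset.sum_congr rfl this, Finset.sum_const, Finset.card_univ, nsmul_eq_mul, mul_one, hn]
  have hcoeff1ne : PowerSeries.coeff 1 w ≠ 0 := by
    rw [hcoeff1]
    exact hcop.ne_zero
  -- eigenvalue property
  have heig : ∀ g : G, φ g w = PowerSeries.C (c g) * w := by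
    intro h
    rw [hw, map_sum, Finset.mul_sum]
    rw [← Equiv.sum_comp (Equiv.mulLeft h) (fun g => PowerSeries.C (c h) *
      (PowerSeries.C (c g)⁻¹ * φ g PowerSeries.X))]
    apply Finset.sum_congr rfl
    intro g _
    have h1 : φ h (PowerSeries.C (c g)⁻¹ * φ g PowerSeries.X)
        = PowerSeries.C (c g)⁻¹ * φ (h * g) PowerSeries.X := by
      rw [map_mul, PowerSeries.C_eq_algebraMap, (φ h).commutes, ← PowerSeries.C_eq_algebraMap,
        map_mul φ]
      rfl
    rw [h1]
    have h2 : (Equiv.mulLeft h) g = h * g := rfl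
    rw [h2, hcmul h g, mul_inv]
    rw [← mul_assoc, ← map_mul]
    congr 2
    rw [← mul_assoc, mul_inv_cancel₀ (hcne h), one_mul]
  -- injectivity of χ
  have hχinj : Function.Injective χ := by
    rw [injective_iff_map_eq_one]
    intro g hg
    have hcg : c g = 1 := by
      have := congrArg (Units.val) hg
      simpa [hχval] using this
    have hpow : (φ g) ^ n = 1 := by
      rw [← map_pow, hn, pow_card_eq_one, map_one]
    have hfix : φ g PowerSeries.X = PowerSeries.X :=
      SkewAux.fixes_X hpow hcop hcg
    have : φ g = 1 := SkewAux.eq_one_of_fixes_X (φ g) hfix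
    apply hφ
    rw [this, map_one]
  refine ⟨w, χ, hconst, hcoeff1ne, hχinj, fun g => by rw [hχval]; exact heig g, ?_⟩
  intro g
  have : χ g ^ n = 1 := by
    rw [← map_pow, hn, pow_card_eq_one, map_one]
  calc ((χ g : k)) ^ n = ((χ g ^ n : kˣ) : k) := by rw [Units.val_pow_eq_pow_val]
    _ = 1 := by rw [this, Units.val_one]
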